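/- Let a > 0 and define F(β) = ( (1 + β)² / (2β) )·( a + 4β/(1 + 4β) ) for β > 0 (the asymptotic variance for Laplace sensing noise after the substitution β = b²ω², up to the factor b²). Then F has a unique stationary point β* on (0, ∞), β* is the unique global minimizer of F on (0, ∞), and β* = (1/12)·( c/(a + 1) + (25a + 4)/c + 2 ), where c = ( 125a³ + 258a² + 141a + 3√3·√( a·(a + 1)³·(375a + 32) ) + 8 )^{1/3}. -/

import Mathlib

open Filter Topology Set

set_option maxHeartbeats 1000000 in
/-- Optimization of the Laplace-sensing-noise asymptotic variance
`F(β) = ((1+β)²/(2β)) (a + 4β/(1+4β))` (with `β = b²ω²`): `F` has a unique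
stationary point `β*` on `(0, ∞)`, which is its unique global minimizer and is
given in closed form by `β* = (1/12)(c/(a+1) + (25a+4)/c + 2)` with
`c = (125a³ + 258a² + 141a + 3√3 √(a(a+1)³(375a+32)) + 8)^{1/3}`. -/
theorem laplace_asv_optimal_beta
    (a : ℝ) (ha : 0 < a)
    (F : ℝ → ℝ)
    (hF : ∀ β, F β = (1 + β) ^ 2 / (2 * β) * (a + 4 * β / (1 + 4 * β)))
    (c : ℝ)
    (hc : c = (125 * a ^ 3 + 258 * a ^ 2 + 141 * a
        + 3 * Real.sqrt 3 * Real.sqrt (a * (a + 1) ^ 3 * (375 * a + 32)) + 8)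
        ^ ((1 : ℝ) / 3))
    (βs : ℝ)
    (hβs : βs = (1 / 12) * (c / (a + 1) + (25 * a + 4) / c + 2)) :
    0 < βs ∧
    deriv F βs = 0 ∧
    (∀ β > (0 : ℝ), deriv F β = 0 → β = βs) ∧
    (∀ β > (0 : ℝ), β ≠ βs → F βs < F β) := by
  have ha1 : (0:ℝ) < a + 1 := by linarith
  have ha1' : a + 1 ≠ 0 := ne_of_gt ha1
  -- square root facts
  set s : ℝ := Real.sqrt (a * (a + 1) ^ 3 * (375 * a + 32)) with hs
  have hDpos : 0 < a * (a + 1) ^ 3 * (375 * a + 32) := by positivity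
  have hs2 : s ^ 2 = a * (a + 1) ^ 3 * (375 * a + 32) := Real.sq_sqrt hDpos.le
  have hspos : 0 < s := Real.sqrt_pos.mpr hDpos
  set r : ℝ := Real.sqrt 3 with hr
  have hr2 : r ^ 2 = 3 := Real.sq_sqrt (by norm_num)
  have hrpos : 0 < r := Real.sqrt_pos.mpr (by norm_num)
  have hSpos : 0 < 125 * a ^ 3 + 258 * a ^ 2 + 141 * a + 3 * r * s + 8 := by positivity
  have hcpos : 0 < c := by rw [hc]; exact Real.rpow_pos_of_pos hSpos _
  have hcne : c ≠ 0 := ne_of_gt hcpos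
  have ht3 : c ^ 3 = 125 * a ^ 3 + 258 * a ^ 2 + 141 * a + 3 * r * s + 8 := by
    rw [hc, ← Real.rpow_natCast ((125 * a ^ 3 + 258 * a ^ 2 + 141 * a + 3 * r * s + 8)
      ^ ((1:ℝ)/3)) 3, ← Real.rpow_mul hSpos.le]
    norm_num
  -- u, v
  obtain ⟨u, hu⟩ : ∃ u : ℝ, u = c / (a + 1) := ⟨_, rfl⟩
  obtain ⟨v, hv⟩ : ∃ v : ℝ, v = (25 * a + 4) / c := ⟨_, rfl⟩
  rw [show c / (a + 1) = u from hu.symm, show (25 * a + 4) / c = v from hv.symm] at hβs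
  have hupos : 0 < u := hu ▸ div_pos hcpos ha1
  have hvpos : 0 < v := hv ▸ div_pos (by linarith) hcpos
  have huv' : u * v * (a + 1) = 25 * a + 4 := by
    rw [hu, hv]; field_simp
  have hu3 : u ^ 3 * (a + 1) ^ 3 = 125 * a ^ 3 + 258 * a ^ 2 + 141 * a + 3 * r * s + 8 := by
    rw [hu, div_pow, div_mul_cancel₀ _ (pow_ne_zero 3 ha1')]; exact ht3
  have hv3c : v ^ 3 * c ^ 3 = (25 * a + 4) ^ 3 := by
    rw [hv, div_pow, div_mul_cancel₀ _ (pow_ne_zero 3 hcne)]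
  have hSS' : c ^ 3 * (125 * a ^ 3 + 258 * a ^ 2 + 141 * a + 8 - 3 * r * s)
      = (25 * a + 4) ^ 3 * (a + 1) ^ 3 := by
    linear_combination (125 * a ^ 3 + 258 * a ^ 2 + 141 * a + 8 - 3 * r * s) * ht3
      - 9 * s ^ 2 * hr2 - 27 * hs2
  have hv3 : v ^ 3 * (a + 1) ^ 3 = 125 * a ^ 3 + 258 * a ^ 2 + 141 * a + 8 - 3 * r * s := by
    have h := mul_left_cancel₀ (pow_ne_zero 3 hcne)
      (show c ^ 3 * (v ^ 3 * (a + 1) ^ 3)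
          = c ^ 3 * (125 * a ^ 3 + 258 * a ^ 2 + 141 * a + 8 - 3 * r * s) by
        rw [hSS']; linear_combination (a + 1) ^ 3 * hv3c)
    exact h
  -- β* > 1/2
  have huvgt : 4 < u * v := by nlinarith [huv', ha1, ha]
  have hw4 : 4 < u + v := by
    nlinarith [sq_nonneg (u - v), huvgt, hupos, hvpos]
  have hbpos : 0 < βs := by rw [hβs]; linarith
  have hbhalf : 1 / 2 < βs := by rw [hβs]; linarith
  -- the cubic stationarity identity
  have key : (a + 1) ^ 3 * (u + v) ^ 3
      = (75 * a + 12) * (a + 1) ^ 2 * (u + v) + (250 * a + 16) * (a + 1) ^ 2 := by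
    linear_combination hu3 + hv3 + 3 * (a + 1) ^ 2 * (u + v) * huv'
  have key2 : (a + 1) * (u + v) ^ 3 = (75 * a + 12) * (u + v) + (250 * a + 16) := by
    apply mul_left_cancel₀ (pow_ne_zero 2 ha1')
    linear_combination key
  have hQs : 16 * (a + 1) * βs ^ 3 - 8 * (a + 1) * βs ^ 2 - 7 * a * βs - a = 0 := by
    rw [hβs]
    linear_combination (1 / 108) * key2
  -- cubic sign analysis
  set P : ℝ → ℝ := fun β => 16 * (a + 1) * β ^ 3 - 8 * (a + 1) * β ^ 2 - 7 * a * β - a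
    with hP
  have hfac : ∀ β : ℝ, P β = (β - βs) * (16 * (a + 1) * β ^ 2
      + (16 * (a + 1) * βs - 8 * (a + 1)) * β
      + (16 * (a + 1) * βs ^ 2 - 8 * (a + 1) * βs - 7 * a)) := by
    intro β
    simp only [hP]
    linear_combination hQs
  have hCpos : 0 < 16 * (a + 1) * βs ^ 2 - 8 * (a + 1) * βs - 7 * a := by
    nlinarith [hQs, hbpos]
  have hbracket : ∀ β : ℝ, 0 ≤ β → 0 < 16 * (a + 1) * β ^ 2
      + (16 * (a + 1) * βs - 8 * (a + 1)) * β
      + (16 * (a + 1) * βs ^ 2 - 8 * (a + 1) * βs - 7 * a) := by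
    intro β hβ
    have h1 : 0 ≤ 16 * (a + 1) * β ^ 2 := by positivity
    have h2 : 0 ≤ (16 * (a + 1) * βs - 8 * (a + 1)) * β :=
      mul_nonneg (by nlinarith [hbhalf, ha1]) hβ
    linarith [hCpos]
  -- derivative of F
  have hderiv : ∀ β : ℝ, 0 < β →
      HasDerivAt F ((β + 1) * P β / (β ^ 2 * (1 + 4 * β) ^ 2 * 2)) β := by
    intro β hβ
    have hβne : β ≠ 0 := ne_of_gt hβ
    have h2βne : (2:ℝ) * β ≠ 0 := by positivity
    have h4pos : (0:ℝ) < 1 + 4 * β := by linarith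
    have h4ne : (1:ℝ) + 4 * β ≠ 0 := ne_of_gt h4pos
    have hFe : F = fun b => (1 + b) ^ 2 / (2 * b) * (a + 4 * b / (1 + 4 * b)) := funext hF
    rw [hFe]
    have d1 : HasDerivAt (fun b : ℝ => (1 + b) ^ 2) (2 * (1 + β) ^ 1 * 1) β :=
      ((hasDerivAt_id' (x := β)).const_add 1).pow 2
    have d2 : HasDerivAt (fun b : ℝ => 2 * b) 2 β := by
      simpa using (hasDerivAt_id' (x := β)).const_mul 2
    have d3 : HasDerivAt (fun b : ℝ => 4 * b) 4 β := by
      simpa using (hasDerivAt_id' (x := β)).const_mul 4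
    have d4 : HasDerivAt (fun b : ℝ => 1 + 4 * b) 4 β := d3.const_add 1
    have d5 := d1.div d2 h2βne
    have d6 := (d3.div d4 h4ne).const_add a
    have d8 := d5.mul d6
    refine d8.congr_deriv ?_
    simp only [hP, Pi.div_apply]
    field_simp
    ring
  have hFd : ∀ β : ℝ, 0 < β →
      deriv F β = (β + 1) * P β / (β ^ 2 * (1 + 4 * β) ^ 2 * 2) := fun β hβ =>
    (hderiv β hβ).deriv
  -- continuity on positive sets
  have hcont : ∀ x : Set ℝ, (∀ y ∈ x, (0:ℝ) < y) → ContinuousOn F x := by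
    intro x hx y hy
    exact ((hderiv y (hx y hy)).continuousAt).continuousWithinAt
  -- sign of deriv
  have hdpos : ∀ β : ℝ, βs < β → 0 < deriv F β := by
    intro β hβ
    have hβpos : 0 < β := lt_trans hbpos hβ
    rw [hFd β hβpos, hfac β]
    have h1 : 0 < β - βs := by linarith
    have h2 := hbracket β hβpos.le
    have h3 : (0:ℝ) < β ^ 2 * (1 + 4 * β) ^ 2 * 2 := by positivity
    positivity
  have hdneg : ∀ β : ℝ, 0 < β → β < βs → deriv F β < 0 := by
    intro β hβpos hβ
    rw [hFd β hβpos, hfac β]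
    have h1 : β - βs < 0 := by linarith
    have h2 := hbracket β hβpos.le
    have h3 : (0:ℝ) < β ^ 2 * (1 + 4 * β) ^ 2 * 2 := by positivity
    apply div_neg_of_neg_of_pos _ h3
    have : (β - βs) * (16 * (a + 1) * β ^ 2 + (16 * (a + 1) * βs - 8 * (a + 1)) * β
        + (16 * (a + 1) * βs ^ 2 - 8 * (a + 1) * βs - 7 * a)) < 0 :=
      mul_neg_of_neg_of_pos h1 h2
    nlinarith [this, hβpos]
  refine ⟨hbpos, ?_, ?_, ?_⟩
  · rw [hFd βs hbpos, hfac βs]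
    simp
  · intro β hβ hd
    by_contra hne
    rcases lt_or_gt_of_ne hne with h | h
    · exact absurd hd (ne_of_lt (hdneg β hβ h))
    · exact absurd hd (ne_of_gt (hdpos β h))
  · intro β hβ hne
    rcases lt_or_gt_of_ne hne with h | h
    · -- β < βs : F strictly decreasing on [β, βs]
      have hanti : StrictAntiOn F (Icc β βs) := by
        apply strictAntiOn_of_deriv_neg (convex_Icc _ _)
        · exact hcont _ (fun y hy => lt_of_lt_of_le hβ hy.1)
        · intro x hx
          rw [interior_Icc] at hx
          exact hdneg x (lt_trans hβ hx.1) hx.2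
      have := hanti (left_mem_Icc.mpr h.le) (right_mem_Icc.mpr h.le) h
      linarith
    · -- βs < β : F strictly increasing on [βs, β]
      have hmono : StrictMonoOn F (Icc βs β) := by
        apply strictMonoOn_of_deriv_pos (convex_Icc _ _)
        · exact hcont _ (fun y hy => lt_of_lt_of_le hbpos hy.1)
        · intro x hx
          rw [interior_Icc] at hx
          exact hdpos x hx.1
      exact hmono (left_mem_Icc.mpr h.le) (right_mem_Icc.mpr h.le) h
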